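/- For every real x ≥ 1, e^x · Γ(x+1) / (x^x · √(2πx) · exp(ψ'(x+1/2)/12)) < exp(1/(240x^3)). -/

import Mathlib

open Real Filter Topology

noncomputable def trigamma (x : ℝ) : ℝ :=
  iteratedDeriv 2 (fun y => Real.log (Real.Gamma y)) x

open Nat


noncomputable def Rr (t : ℝ) : ℝ :=
  Real.log (Real.Gamma (t+1)) - (t * Real.log t - t + Real.log (2*Real.pi*t) / 2)

noncomputable def gg (t : ℝ) : ℝ := (t + 1/2) * Real.log (1 + 1/t) - 1

lemma log_one_add_inv (t : ℝ) (ht : 0 < t) :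
    Real.log (1 + 1/t) = Real.log (t+1) - Real.log t := by
  rw [one_div, ← Real.log_div (by positivity) ht.ne']
  congr 1
  field_simp

lemma Rr_rec (t : ℝ) (ht : 0 < t) : Rr t - Rr (t+1) = gg t := by
  have h1 : Real.Gamma (t+1+1) = (t+1) * Real.Gamma (t+1) := Real.Gamma_add_one (by positivity)
  have hG : 0 < Real.Gamma (t+1) := Real.Gamma_pos_of_pos (by positivity)
  have hpi := Real.pi_pos
  unfold Rr gg
  rw [h1, Real.log_mul (by positivity) hG.ne', log_one_add_inv t ht,
    Real.log_mul (by positivity : (2*Real.pi : ℝ) ≠ 0) (by positivity : (t+1:ℝ) ≠ 0),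
    Real.log_mul (by positivity : (2*Real.pi : ℝ) ≠ 0) ht.ne',
    show (t+1) * Real.log (t+1) = t * Real.log (t+1) + Real.log (t+1) by ring]
  ring

lemma gg_hasSum (t : ℝ) (ht : 0 < t) :
    HasSum (fun k : ℕ => (1/(2*(k:ℝ)+3)) * (1/(2*t+1))^(2*k+2)) (gg t) := by
  have h := (Real.hasSum_log_one_add_inv ht).mul_left (t + 1/2)
  have h2 : HasSum (fun k : ℕ => (1/(2*(k:ℝ)+1)) * (1/(2*t+1))^(2*k)) ((t+1/2) * Real.log (1 + t⁻¹)) := by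
    refine h.congr_fun fun k => ?_
    have hs : (2*t+1) ≠ 0 := by positivity
    rw [pow_succ]
    field_simp
  have h3 := (hasSum_nat_add_iff' (f := fun k : ℕ => (1/(2*(k:ℝ)+1)) * (1/(2*t+1))^(2*k)) 1).mpr h2
  simp only [Finset.range_one, Finset.sum_singleton, Nat.cast_zero, pow_zero, mul_zero] at h3
  norm_num at h3
  have hgg : (t+1/2) * Real.log (1 + t⁻¹) - 1 = gg t := by rw [gg, one_div t]
  rw [hgg] at h3
  refine h3.congr_fun fun k => ?_
  simp only [one_div, inv_pow]
  norm_num [mul_add]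
  left; ring



lemma gg_pos (t : ℝ) (ht : 0 < t) : 0 < gg t := by
  have h := gg_hasSum t ht
  have h0 : (0:ℝ) < (1/(2*((0:ℕ):ℝ)+3)) * (1/(2*t+1))^(2*0+2) := by positivity
  exact h0.trans_le (le_hasSum h 0 (fun j _ => by positivity))

lemma gg_le (t : ℝ) (ht : 0 < t) :
    gg t ≤ 1/(3*(2*t+1)^2) + 1/(5*(2*t+1)^2*((2*t+1)^2-1)) := by
  have hs : (0:ℝ) < 2*t+1 := by positivity
  have hs1 : (1:ℝ) < (2*t+1)^2 := by nlinarith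
  have h := (hasSum_nat_add_iff' (f := fun k : ℕ => (1/(2*(k:ℝ)+3)) * (1/(2*t+1))^(2*k+2)) 1).mpr
    (gg_hasSum t ht)
  simp only [Finset.range_one, Finset.sum_singleton, Nat.cast_zero] at h
  have hr0 : (0:ℝ) ≤ (1/(2*t+1))^2 := by positivity
  have hr1 : (1/(2*t+1))^2 < 1 := by
    rw [div_pow, one_pow, div_lt_one (by positivity)]; exact hs1
  have hgeo := (hasSum_geometric_of_lt_one hr0 hr1).mul_left ((1/5)*((1/(2*t+1))^2)^2)
  have hle := hasSum_le (fun k => ?_) h hgeo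
  · have hs2 : ((2*t+1):ℝ)^2 - 1 ≠ 0 := by nlinarith
    have heq : (1/5)*((1/(2*t+1))^2)^2 * (1 - (1/(2*t+1))^2)⁻¹
        = 1/(5*(2*t+1)^2*((2*t+1)^2-1)) := by
      rw [show (1 - (1/(2*t+1))^2) = ((2*t+1)^2-1)/(2*t+1)^2 by field_simp, inv_div]
      rw [div_pow, one_pow, div_pow, one_pow, ← pow_mul]
      field_simp
    have h0eq : (1/(2*(0:ℝ)+3)) * (1/(2*t+1))^(2*0+2) = 1/(3*(2*t+1)^2) := by
      rw [div_pow, one_pow]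
      norm_num
      ring
    rw [h0eq, heq] at hle
    linarith
  · -- termwise: (1/(2(k+1)+3)) * (1/(2t+1))^(2(k+1)+2) ≤ (1/5) * ((1/(2t+1))^2)^2 * ((1/(2t+1))^2)^k
    have : ((1/(2*t+1))^2)^2 * ((1/(2*t+1))^2)^k = (1/(2*t+1))^(2*(k+1)+2) := by
      rw [← pow_mul, ← pow_mul, ← pow_add]; congr 1; ring
    rw [mul_assoc, this]
    have hp : (0:ℝ) ≤ (1/(2*t+1))^(2*(k+1)+2) := by positivity
    have : (1:ℝ)/(2*(↑(k+1):ℝ)+3) ≤ 1/5 := by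
      apply div_le_div_of_nonneg_left (by norm_num) (by norm_num)
      push_cast; linarith [Nat.cast_nonneg (α := ℝ) k]
    exact mul_le_mul_of_nonneg_right this hp

lemma gg_le' (t : ℝ) (ht : 0 < t) : gg t ≤ 1/(12*t*(t+1)) := by
  refine (gg_le t ht).trans ?_
  have h1 : (0:ℝ) < 3*(2*t+1)^2 := by positivity
  have h2 : (0:ℝ) < (2*t+1)^2-1 := by nlinarith
  have h3 : (0:ℝ) < 12*t*(t+1) := by positivity
  rw [div_add_div _ _ (by positivity) (by positivity), div_le_div_iff₀ (by positivity) h3]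
  nlinarith [sq_nonneg t, sq_nonneg (t+1)]

lemma gg_lt (t : ℝ) (ht : 1 ≤ t) :
    gg t < 1/(12*(t+1/2)^2) + (1/240)*(1/t^3 - 1/(t+1)^3) := by
  have ht0 : (0:ℝ) < t := by linarith
  refine (gg_le t ht0).trans_lt ?_
  have e1 : 1/(12*(t+1/2)^2) = 1/(3*(2*t+1)^2) := by
    rw [one_div, one_div]; congr 1; ring
  rw [e1]
  have h2 : (0:ℝ) < (2*t+1)^2-1 := by nlinarith
  have key : 1/(5*(2*t+1)^2*((2*t+1)^2-1)) < (1/240)*(1/t^3 - 1/(t+1)^3) := by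
    have e2 : (1/240)*((1:ℝ)/t^3 - 1/(t+1)^3) = (3*t^2+3*t+1)/(240*(t^3*(t+1)^3)) := by
      field_simp; ring
    rw [e2, div_lt_div_iff₀ (by positivity) (by positivity)]
    have hu : (0:ℝ) < t*(t+1) := by positivity
    nlinarith [mul_pos hu hu, mul_pos (mul_pos hu hu) hu, pow_pos ht0 3, mul_pos (mul_pos hu hu) (mul_pos hu hu)]
  linarith


noncomputable def eps (n : ℕ) : ℝ :=
  Real.log (n !) - ((n:ℝ) * Real.log n - n + Real.log (2*Real.pi*n)/2)

lemma logfact_eq (n : ℕ) :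
    Real.log (n !) = (n:ℝ) * Real.log n - n + Real.log (2*Real.pi*n)/2 + eps n := by
  rw [eps]; ring

lemma eps_eq (n : ℕ) (hn : 1 ≤ n) :
    eps n = Real.log (Stirling.stirlingSeq n) - Real.log (Real.sqrt Real.pi) := by
  have hn0 : (0:ℝ) < n := by exact_mod_cast hn
  rw [Stirling.log_stirlingSeq_formula, eps, Real.log_sqrt Real.pi_pos.le,
      Real.log_div hn0.ne' (Real.exp_ne_zero 1), Real.log_exp,
      show 2*Real.pi*(n:ℝ) = (2*(n:ℝ))*Real.pi by ring,
      Real.log_mul (by positivity) Real.pi_pos.ne']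
  ring

lemma eps_tendsto : Tendsto eps atTop (𝓝 0) := by
  have h0 : (0:ℝ) < Real.sqrt Real.pi := Real.sqrt_pos.mpr Real.pi_pos
  have h1 : Tendsto (fun n : ℕ => Real.log (Stirling.stirlingSeq n) - Real.log (Real.sqrt Real.pi))
      atTop (𝓝 (Real.log (Real.sqrt Real.pi) - Real.log (Real.sqrt Real.pi))) :=
    (((Real.continuousAt_log h0.ne').tendsto.comp Stirling.tendsto_stirlingSeq_sqrt_pi)).sub_const _
  rw [sub_self] at h1
  refine h1.congr' ?_
  filter_upwards [eventually_ge_atTop 1] with n hn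
  exact (eps_eq n hn).symm

lemma logGamma_upper (K : ℕ) (θ : ℝ) (hθ0 : 0 ≤ θ) (hθ1 : θ < 1) :
    Real.log (Real.Gamma ((K:ℝ) + θ + 1)) ≤
      (1-θ) * Real.log (K !) + θ * Real.log ((K+1)!) := by
  have h := Real.convexOn_log_Gamma.2 (Set.mem_Ioi.mpr (by positivity : (0:ℝ) < (K:ℝ)+1))
    (Set.mem_Ioi.mpr (by positivity : (0:ℝ) < (K:ℝ)+2))
    (by linarith : (0:ℝ) ≤ 1-θ) (hθ0 : (0:ℝ) ≤ θ) (by ring)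
  simp only [smul_eq_mul, Function.comp_apply] at h
  have e1 : (1-θ) * ((K:ℝ)+1) + θ * ((K:ℝ)+2) = (K:ℝ) + θ + 1 := by ring
  rw [e1] at h
  have e2 : Real.Gamma ((K:ℝ)+1) = (K ! : ℝ) := Real.Gamma_nat_eq_factorial K
  have e3 : Real.Gamma ((K:ℝ)+2) = ((K+1)! : ℝ) := by
    have h1 := Real.Gamma_nat_eq_factorial (K+1)
    push_cast at h1 ⊢
    rw [← h1]
    congr 1
    ring
  rwa [e2, e3] at h

lemma logGamma_lower (K : ℕ) (θ : ℝ) (hK : 1 ≤ K) (hθ0 : 0 ≤ θ) (hθ1 : θ < 1) :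
    Real.log (K !) + θ * Real.log ((K:ℝ)+θ) ≤ Real.log (Real.Gamma ((K:ℝ) + θ + 1)) := by
  have hK0 : (0:ℝ) < K := by exact_mod_cast hK
  have hy : (0:ℝ) < (K:ℝ) + θ := by linarith
  have h := Real.convexOn_log_Gamma.2 (Set.mem_Ioi.mpr hy)
    (Set.mem_Ioi.mpr (by linarith : (0:ℝ) < (K:ℝ)+θ+1))
    (hθ0 : (0:ℝ) ≤ θ) (by linarith : (0:ℝ) ≤ 1-θ) (by ring)
  simp only [smul_eq_mul, Function.comp_apply] at h
  have e1 : θ * ((K:ℝ)+θ) + (1-θ) * ((K:ℝ)+θ+1) = (K:ℝ) + 1 := by ring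
  rw [e1] at h
  have e2 : Real.Gamma ((K:ℝ)+1) = (K ! : ℝ) := Real.Gamma_nat_eq_factorial K
  have e4 : Real.log (Real.Gamma ((K:ℝ)+θ+1)) =
      Real.log ((K:ℝ)+θ) + Real.log (Real.Gamma ((K:ℝ)+θ)) := by
    rw [Real.Gamma_add_one hy.ne', Real.log_mul hy.ne' (Real.Gamma_pos_of_pos hy).ne']
  rw [e2] at h
  rw [e4] at h ⊢
  linarith

lemma lim_nlog (c : ℝ) : Tendsto (fun n : ℕ => (n:ℝ) * Real.log (1 + c/n)) atTop (𝓝 c) := by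
  have h := (Real.continuousAt_log (Real.exp_pos c).ne').tendsto.comp
    (Real.tendsto_one_add_div_pow_exp c)
  rw [Real.log_exp] at h
  refine h.congr fun n => ?_
  simp only [Function.comp_apply, Real.log_pow]

lemma lim_logdiff (c : ℝ) (hc : 0 ≤ c) :
    Tendsto (fun n : ℕ => Real.log ((n:ℝ)+c) - Real.log n) atTop (𝓝 0) := by
  have h1 : Tendsto (fun n : ℕ => 1 + c/(n:ℝ)) atTop (𝓝 (1 + 0)) :=
    (tendsto_const_div_atTop_nhds_zero_nat c).const_add 1
  rw [add_zero] at h1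
  have h2 := (Real.continuousAt_log one_ne_zero).tendsto.comp h1
  rw [Real.log_one] at h2
  refine h2.congr' ?_
  filter_upwards [eventually_ge_atTop 1] with n hn
  have hn0 : (0:ℝ) < n := by exact_mod_cast hn
  simp only [Function.comp_apply]
  rw [show 1 + c/(n:ℝ) = ((n:ℝ)+c)/n by field_simp, Real.log_div (by linarith) hn0.ne']

lemma Rr_tail_tendsto (x : ℝ) (hx : 1 ≤ x) :
    Tendsto (fun N : ℕ => Rr (x + N)) atTop (𝓝 0) := by
  set m : ℕ := ⌊x⌋₊ with hm
  have hm1 : 1 ≤ m := Nat.le_floor (by exact_mod_cast hx)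
  set θ : ℝ := x - m with hθ
  have hθ0 : 0 ≤ θ := by
    have := Nat.floor_le (by linarith : (0:ℝ) ≤ x)
    simp only [hθ]; linarith
  have hθ1 : θ < 1 := by
    have := Nat.lt_floor_add_one x
    simp only [hθ]; linarith
  -- the casts
  have hxN : ∀ N : ℕ, x + N = ((N+m : ℕ):ℝ) + θ := by
    intro N; push_cast; ring
  have hKpos : ∀ N : ℕ, (0:ℝ) < ((N+m:ℕ):ℝ) := by
    intro N; have : 1 ≤ N + m := le_add_of_le_right hm1; exact_mod_cast this
  -- upper and lower sequences
  set U : ℕ → ℝ := fun N =>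
    (1-θ) * Real.log ((N+m)!) + θ * Real.log (((N+m)+1)!) -
      ((x+N) * Real.log (x+N) - (x+N) + Real.log (2*Real.pi*(x+N))/2) with hU
  set L : ℕ → ℝ := fun N =>
    Real.log ((N+m)!) + θ * Real.log (x+N) -
      ((x+N) * Real.log (x+N) - (x+N) + Real.log (2*Real.pi*(x+N))/2) with hL
  have hRU : ∀ N : ℕ, Rr (x+N) ≤ U N := by
    intro N
    have h := logGamma_upper (N+m) θ hθ0 hθ1
    rw [← hxN N] at h
    simp only [hU, Rr]
    exact sub_le_sub_right h _
  have hRL : ∀ N : ℕ, L N ≤ Rr (x+N) := by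
    intro N
    have h := logGamma_lower (N+m) θ (le_add_of_le_right hm1) hθ0 hθ1
    rw [← hxN N] at h
    simp only [hL, Rr]
    exact sub_le_sub_right h _
  -- limits
  have hepsm : Tendsto (fun N : ℕ => eps (N+m)) atTop (𝓝 0) :=
    eps_tendsto.comp (tendsto_add_atTop_nat m)
  have hepsm1 : Tendsto (fun N : ℕ => eps ((N+m)+1)) atTop (𝓝 0) :=
    eps_tendsto.comp ((tendsto_add_atTop_nat 1).comp (tendsto_add_atTop_nat m))
  have hA1 : Tendsto (fun N : ℕ => (((N+m:ℕ)):ℝ) * Real.log (1 + 1/((N+m:ℕ):ℝ))) atTop (𝓝 1) :=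
    (lim_nlog 1).comp (tendsto_add_atTop_nat m)
  have hA2 : Tendsto (fun N : ℕ => (((N+m:ℕ)):ℝ) * Real.log (1 + θ/((N+m:ℕ):ℝ))) atTop (𝓝 θ) :=
    (lim_nlog θ).comp (tendsto_add_atTop_nat m)
  have hA3 : Tendsto (fun N : ℕ => Real.log (((N+m:ℕ):ℝ)+1) - Real.log ((N+m:ℕ):ℝ)) atTop (𝓝 0) :=
    (lim_logdiff 1 zero_le_one).comp (tendsto_add_atTop_nat m)
  have hA4 : Tendsto (fun N : ℕ => Real.log (((N+m:ℕ):ℝ)+θ) - Real.log ((N+m:ℕ):ℝ)) atTop (𝓝 0) :=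
    (lim_logdiff θ hθ0).comp (tendsto_add_atTop_nat m)
  -- expressing U and L
  have hUeq : ∀ N : ℕ, U N =
      (1-θ) * eps (N+m) + θ * eps ((N+m)+1)
      + (θ * ((((N+m:ℕ)):ℝ) * Real.log (1 + 1/((N+m:ℕ):ℝ)))
         - (((N+m:ℕ)):ℝ) * Real.log (1 + θ/((N+m:ℕ):ℝ))
         + θ * ((Real.log (((N+m:ℕ):ℝ)+1) - Real.log ((N+m:ℕ):ℝ))
                - (Real.log (((N+m:ℕ):ℝ)+θ) - Real.log ((N+m:ℕ):ℝ))))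
      + (1/2) * (θ * (Real.log (((N+m:ℕ):ℝ)+1) - Real.log ((N+m:ℕ):ℝ))
                 - (Real.log (((N+m:ℕ):ℝ)+θ) - Real.log ((N+m:ℕ):ℝ))) := by
    intro N
    have hK0 : (0:ℝ) < ((N+m:ℕ):ℝ) := hKpos N
    have l1 : Real.log (1 + 1/((N+m:ℕ):ℝ)) = Real.log (((N+m:ℕ):ℝ)+1) - Real.log ((N+m:ℕ):ℝ) := by
      rw [show (1:ℝ) + 1/((N+m:ℕ):ℝ) = (((N+m:ℕ):ℝ)+1)/((N+m:ℕ):ℝ) by field_simp,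
        Real.log_div (by linarith) hK0.ne']
    have l2 : Real.log (1 + θ/((N+m:ℕ):ℝ)) = Real.log (((N+m:ℕ):ℝ)+θ) - Real.log ((N+m:ℕ):ℝ) := by
      rw [show (1:ℝ) + θ/((N+m:ℕ):ℝ) = (((N+m:ℕ):ℝ)+θ)/((N+m:ℕ):ℝ) by field_simp,
        Real.log_div (by linarith) hK0.ne']
    have l3 : Real.log (2*Real.pi*(((N+m:ℕ):ℝ)+θ)) = Real.log (2*Real.pi) + Real.log (((N+m:ℕ):ℝ)+θ) :=
      Real.log_mul (by positivity) (by linarith)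
    have l4 : Real.log (2*Real.pi*((N+m:ℕ):ℝ)) = Real.log (2*Real.pi) + Real.log ((N+m:ℕ):ℝ) :=
      Real.log_mul (by positivity) hK0.ne'
    have l5 : Real.log (2*Real.pi*(((N+m:ℕ):ℝ)+1)) = Real.log (2*Real.pi) + Real.log (((N+m:ℕ):ℝ)+1) :=
      Real.log_mul (by positivity) (by linarith)
    have ecast : (((N+m)+1:ℕ):ℝ) = ((N+m:ℕ):ℝ)+1 := by push_cast; ring
    simp only [hU]
    rw [hxN N, logfact_eq (N+m), logfact_eq ((N+m)+1), l1, l2, l3, l4, ecast, l5]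
    ring
  have hLeq : ∀ N : ℕ, L N =
      eps (N+m) + θ - (((N+m:ℕ)):ℝ) * Real.log (1 + θ/((N+m:ℕ):ℝ))
      - (1/2) * (Real.log (((N+m:ℕ):ℝ)+θ) - Real.log ((N+m:ℕ):ℝ)) := by
    intro N
    have hK0 : (0:ℝ) < ((N+m:ℕ):ℝ) := hKpos N
    have l2 : Real.log (1 + θ/((N+m:ℕ):ℝ)) = Real.log (((N+m:ℕ):ℝ)+θ) - Real.log ((N+m:ℕ):ℝ) := by
      rw [show (1:ℝ) + θ/((N+m:ℕ):ℝ) = (((N+m:ℕ):ℝ)+θ)/((N+m:ℕ):ℝ) by field_simp,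
        Real.log_div (by linarith) hK0.ne']
    have l3 : Real.log (2*Real.pi*(((N+m:ℕ):ℝ)+θ)) = Real.log (2*Real.pi) + Real.log (((N+m:ℕ):ℝ)+θ) :=
      Real.log_mul (by positivity) (by linarith)
    have l4 : Real.log (2*Real.pi*((N+m:ℕ):ℝ)) = Real.log (2*Real.pi) + Real.log ((N+m:ℕ):ℝ) :=
      Real.log_mul (by positivity) hK0.ne'
    simp only [hL]
    rw [hxN N, logfact_eq (N+m), l2, l3, l4]
    ring
  have hUlim : Tendsto U atTop (𝓝 0) := by
    have : Tendsto (fun N : ℕ =>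
      (1-θ) * eps (N+m) + θ * eps ((N+m)+1)
      + (θ * ((((N+m:ℕ)):ℝ) * Real.log (1 + 1/((N+m:ℕ):ℝ)))
         - (((N+m:ℕ)):ℝ) * Real.log (1 + θ/((N+m:ℕ):ℝ))
         + θ * ((Real.log (((N+m:ℕ):ℝ)+1) - Real.log ((N+m:ℕ):ℝ))
                - (Real.log (((N+m:ℕ):ℝ)+θ) - Real.log ((N+m:ℕ):ℝ))))
      + (1/2) * (θ * (Real.log (((N+m:ℕ):ℝ)+1) - Real.log ((N+m:ℕ):ℝ))
                 - (Real.log (((N+m:ℕ):ℝ)+θ) - Real.log ((N+m:ℕ):ℝ)))) atTop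
      (𝓝 (((1-θ)*0 + θ*0) + (θ*1 - θ + θ*(0-0)) + (1/2)*(θ*0 - 0))) := by
      exact (((hepsm.const_mul (1-θ)).add (hepsm1.const_mul θ)).add
        (((hA1.const_mul θ).sub hA2).add ((hA3.sub hA4).const_mul θ))).add
        (((hA3.const_mul θ).sub hA4).const_mul (1/2))
    have e0 : ((1-θ)*0 + θ*0) + (θ*1 - θ + θ*(0-0)) + (1/2)*(θ*0 - 0) = 0 := by ring
    rw [e0] at this
    exact this.congr fun N => (hUeq N).symm
  have hLlim : Tendsto L atTop (𝓝 0) := by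
    have : Tendsto (fun N : ℕ =>
      eps (N+m) + θ - (((N+m:ℕ)):ℝ) * Real.log (1 + θ/((N+m:ℕ):ℝ))
      - (1/2) * (Real.log (((N+m:ℕ):ℝ)+θ) - Real.log ((N+m:ℕ):ℝ))) atTop
      (𝓝 ((0 + θ - θ) - (1/2)*0)) := by
      exact (((hepsm.add_const θ).sub hA2)).sub (hA4.const_mul (1/2))
    have e0 : ((0:ℝ) + θ - θ) - (1/2)*0 = 0 := by ring
    rw [e0] at this
    exact this.congr fun N => (hLeq N).symm
  exact tendsto_of_tendsto_of_tendsto_of_le_of_le hLlim hUlim hRL hRU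


lemma Rr_partial (x : ℝ) (hx : 1 ≤ x) (N : ℕ) :
    ∑ n ∈ Finset.range N, gg (x+n) = Rr x - Rr (x+N) := by
  induction N with
  | zero => simp
  | succ N ih =>
    rw [Finset.sum_range_succ, ih]
    have h := Rr_rec (x+N) (by positivity)
    have e : x + (N:ℝ) + 1 = x + ((N:ℕ)+1 : ℕ) := by push_cast; ring
    rw [← e]
    linarith

lemma Rr_hasSum (x : ℝ) (hx : 1 ≤ x) : HasSum (fun n : ℕ => gg (x+n)) (Rr x) := by
  have hnn : ∀ n : ℕ, 0 ≤ gg (x+n) := fun n => (gg_pos _ (by positivity)).le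
  rw [hasSum_iff_tendsto_nat_of_nonneg hnn]
  have h := (tendsto_const_nhds (x := Rr x) (f := atTop (α := ℕ))).sub (Rr_tail_tendsto x hx)
  rw [sub_zero] at h
  exact h.congr fun N => (Rr_partial x hx N).symm

lemma cube_tail (x : ℝ) (hx : 1 ≤ x) :
    Tendsto (fun N : ℕ => 1/(240*(x+N)^3)) atTop (𝓝 0) := by
  have hb : ∀ᶠ N : ℕ in atTop, 1/(240*(x+(N:ℝ))^3) ≤ 1/(N:ℝ) := by
    filter_upwards [eventually_ge_atTop 1] with N hN
    have hN0 : (1:ℝ) ≤ N := by exact_mod_cast hN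
    apply one_div_le_one_div_of_le (by linarith)
    nlinarith [sq_nonneg ((N:ℝ)-1), sq_nonneg (x-1), sq_nonneg ((N:ℝ)+x)]
  have hnn : ∀ᶠ N : ℕ in atTop, (0:ℝ) ≤ 1/(240*(x+(N:ℝ))^3) := by
    filter_upwards with N; positivity
  exact tendsto_of_tendsto_of_tendsto_of_le_of_le' tendsto_const_nhds
    tendsto_one_div_atTop_nhds_zero_nat hnn hb

lemma cube_hasSum (x : ℝ) (hx : 1 ≤ x) :
    HasSum (fun n : ℕ => 1/(240*(x+n)^3) - 1/(240*(x+n+1)^3)) (1/(240*x^3)) := by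
  have hnn : ∀ n : ℕ, 0 ≤ 1/(240*(x+(n:ℝ))^3) - 1/(240*(x+n+1)^3) := by
    intro n
    have h1 : (0:ℝ) < 240*(x+(n:ℝ))^3 := by positivity
    have h2 : 240*(x+(n:ℝ))^3 ≤ 240*(x+n+1)^3 := by nlinarith [sq_nonneg (x+(n:ℝ))]
    have := one_div_le_one_div_of_le h1 h2
    linarith
  rw [hasSum_iff_tendsto_nat_of_nonneg hnn]
  have hpart : ∀ N : ℕ, ∑ n ∈ Finset.range N, (1/(240*(x+(n:ℝ))^3) - 1/(240*(x+n+1)^3))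
      = 1/(240*x^3) - 1/(240*(x+N)^3) := by
    intro N
    induction N with
    | zero => simp
    | succ N ih =>
      rw [Finset.sum_range_succ, ih]
      have e : x + (N:ℝ) + 1 = x + ((N:ℕ)+1 : ℕ) := by push_cast; ring
      rw [← e]
      ring
  have h := (tendsto_const_nhds (x := 1/(240*x^3)) (f := atTop (α := ℕ))).sub (cube_tail x hx)
  rw [sub_zero] at h
  exact h.congr fun N => (hpart N).symm


noncomputable def psi0 (t : ℝ) : ℝ :=
  -Real.eulerMascheroniConstant + ∑' m : ℕ, (1/((m:ℝ)+1) - 1/(t+m))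

noncomputable def psi1 (t : ℝ) : ℝ := ∑' m : ℕ, 1/(t+(m:ℝ))^2

lemma base2 : Summable (fun m : ℕ => 1/((m:ℝ)+1)^2) := by
  have h : Summable (fun n : ℕ => 1/(n:ℝ)^2) := summable_one_div_nat_pow.mpr one_lt_two
  have h2 := (summable_nat_add_iff 1).mpr h
  refine h2.congr fun m => ?_
  push_cast
  ring

lemma aux_bound (a : ℝ) (ha : 0 < a) (x : ℝ) (hx : a ≤ x) (m : ℕ) :
    min a 1 * ((m:ℝ)+1) ≤ x + m := by
  have h1 : min a 1 ≤ x := le_trans (min_le_left a 1) hx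
  have h2 : min a 1 ≤ 1 := min_le_right a 1
  have h3 : (0:ℕ) ≤ m := Nat.zero_le m
  have h4 : (0:ℝ) ≤ (m:ℝ) := Nat.cast_nonneg m
  nlinarith

lemma summable_psi1 (t : ℝ) (ht : 0 < t) : Summable (fun m : ℕ => 1/(t+(m:ℝ))^2) := by
  refine Summable.of_nonneg_of_le (fun m => by positivity)
    (fun m => ?_) (base2.mul_left ((1/min t 1)^2))
  have hmin : 0 < min t 1 := lt_min ht one_pos
  have hb := aux_bound t ht t le_rfl m
  have h1 : (0:ℝ) < min t 1 * ((m:ℝ)+1) := by positivity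
  rw [show (1/min t 1)^2 * (1/((m:ℝ)+1)^2) = 1/((min t 1)^2 * ((m:ℝ)+1)^2) by
    simp [one_div, mul_inv, inv_pow, mul_comm]]
  apply one_div_le_one_div_of_le (by positivity)
  nlinarith [hb, h1]
lemma summable_psi0 (t : ℝ) (ht : 0 < t) :
    Summable (fun m : ℕ => 1/((m:ℝ)+1) - 1/(t+m)) := by
  refine Summable.of_abs (Summable.of_nonneg_of_le (fun m => abs_nonneg _)
    (fun m => ?_) (base2.mul_left ((t+1)/min t 1)))
  have hmin : 0 < min t 1 := lt_min ht one_pos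
  have hm0 : (0:ℝ) < (m:ℝ)+1 := by positivity
  have hm1 : (0:ℝ) < t+(m:ℝ) := by positivity
  have he : 1/((m:ℝ)+1) - 1/(t+m) = (t-1)/(((m:ℝ)+1)*(t+m)) := by
    field_simp
    ring
  rw [he, abs_div, abs_of_pos (by positivity : (0:ℝ) < ((m:ℝ)+1)*(t+m))]
  have hb := aux_bound t ht t le_rfl m
  have hnum : |t-1| ≤ t+1 := by
    rw [abs_le]; constructor <;> linarith
  rw [show ((t+1)/min t 1) * (1/((m:ℝ)+1)^2) = (t+1)/(min t 1 * ((m:ℝ)+1)^2) by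
    field_simp]
  apply div_le_div₀ (by linarith) hnum (by positivity)
  nlinarith

-- partial-sum uniform convergence from tsum M-test
lemma tendstoUniformlyOn_tsum_nat' {f : ℕ → ℝ → ℝ} {u : ℕ → ℝ} (hu : Summable u) {s : Set ℝ}
    (hfu : ∀ n x, x ∈ s → ‖f n x‖ ≤ u n) :
    TendstoUniformlyOn (fun N x => ∑ m ∈ Finset.range (N+1), f m x)
      (fun x => ∑' m, f m x) atTop s := by
  intro v hv
  exact (tendsto_finset_range.comp (tendsto_add_atTop_nat 1)).eventually
    ((tendstoUniformlyOn_tsum hu (fun n x hx => hfu n x hx)) v hv)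

lemma tendstoUniformlyOn_const_seq {c : ℕ → ℝ} {L : ℝ} (h : Tendsto c atTop (𝓝 L)) (s : Set ℝ) :
    TendstoUniformlyOn (fun N _ => c N) (fun _ => L) atTop s := by
  rw [Metric.tendstoUniformlyOn_iff]
  intro ε hε
  filter_upwards [Metric.tendsto_nhds.mp h ε hε] with N hN x _
  exact lt_of_eq_of_lt (dist_comm L (c N)) hN

lemma harmonic_cast (n : ℕ) : ((harmonic n : ℚ) : ℝ) = ∑ m ∈ Finset.range n, 1/((m:ℝ)+1) := by
  rw [harmonic]
  push_cast
  refine Finset.sum_congr rfl fun m _ => ?_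
  rw [one_div]

lemma c_tendsto :
    Tendsto (fun N : ℕ => Real.log N - ∑ m ∈ Finset.range (N+1), 1/((m:ℝ)+1)) atTop
      (𝓝 (-Real.eulerMascheroniConstant)) := by
  have t1 : Tendsto (fun N : ℕ => ((harmonic (N+1) : ℚ) : ℝ) - Real.log ((N+1:ℕ):ℝ)) atTop
      (𝓝 Real.eulerMascheroniConstant) :=
    Real.tendsto_harmonic_sub_log.comp (tendsto_add_atTop_nat 1)
  have t2 : Tendsto (fun N : ℕ => Real.log (((N:ℕ):ℝ)+1) - Real.log ((N:ℕ):ℝ)) atTop (𝓝 0) := by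
    have h1 : Tendsto (fun n : ℕ => 1 + 1/(n:ℝ)) atTop (𝓝 (1 + 0)) :=
      (tendsto_const_div_atTop_nhds_zero_nat 1).const_add 1
    rw [add_zero] at h1
    have h2 := (Real.continuousAt_log one_ne_zero).tendsto.comp h1
    rw [Real.log_one] at h2
    refine h2.congr' ?_
    filter_upwards [eventually_ge_atTop 1] with n hn
    have hn0 : (0:ℝ) < n := by exact_mod_cast hn
    simp only [Function.comp_apply]
    rw [show 1 + 1/(n:ℝ) = ((n:ℝ)+1)/n by field_simp, Real.log_div (by linarith) hn0.ne']
  have h := (t1.add t2).neg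
  rw [show -(Real.eulerMascheroniConstant + 0) = -Real.eulerMascheroniConstant by ring] at h
  refine h.congr fun N => ?_
  rw [harmonic_cast]
  push_cast
  ring

lemma tlu_psi0 : TendstoLocallyUniformlyOn
    (fun (N:ℕ) (t:ℝ) => Real.log N - ∑ m ∈ Finset.range (N+1), 1/(t+(m:ℝ)))
    psi0 atTop (Set.Ioi 0) := by
  rw [tendstoLocallyUniformlyOn_iff_forall_isCompact isOpen_Ioi]
  intro K hK hKc
  rcases K.eq_empty_or_nonempty with rfl | hne
  · exact tendstoUniformlyOn_empty
  obtain ⟨a, haK, ha⟩ := hKc.exists_isLeast hne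
  obtain ⟨b, hbK, hb⟩ := hKc.exists_isGreatest hne
  have ha0 : 0 < a := hK haK
  have hmin : 0 < min a 1 := lt_min ha0 one_pos
  have huni : TendstoUniformlyOn
      (fun (N:ℕ) (t:ℝ) => (Real.log N - ∑ m ∈ Finset.range (N+1), 1/((m:ℝ)+1))
        + ∑ m ∈ Finset.range (N+1), (1/((m:ℝ)+1) - 1/(t+m)))
      (fun t => -Real.eulerMascheroniConstant + ∑' m : ℕ, (1/((m:ℝ)+1) - 1/(t+m)))
      atTop K := by
    refine (tendstoUniformlyOn_const_seq c_tendsto K).add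
      (tendstoUniformlyOn_tsum_nat' (base2.mul_left ((b+1)/min a 1)) (fun m x hx => ?_))
    have hax : a ≤ x := ha hx
    have hxb : x ≤ b := hb hx
    have hx0 : 0 < x := lt_of_lt_of_le ha0 hax
    have hm0 : (0:ℝ) < (m:ℝ)+1 := by positivity
    have hm1 : (0:ℝ) < x+(m:ℝ) := by positivity
    have he : 1/((m:ℝ)+1) - 1/(x+m) = (x-1)/(((m:ℝ)+1)*(x+m)) := by
      field_simp; ring
    rw [Real.norm_eq_abs, he, abs_div, abs_of_pos (by positivity : (0:ℝ) < ((m:ℝ)+1)*(x+m))]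
    have hbnd := aux_bound a ha0 x hax m
    have hnum : |x-1| ≤ b+1 := by
      rw [abs_le]; constructor <;> linarith
    rw [show ((b+1)/min a 1) * (1/((m:ℝ)+1)^2) = (b+1)/(min a 1 * ((m:ℝ)+1)^2) by field_simp]
    apply div_le_div₀ (by linarith) hnum (by positivity)
    nlinarith
  have h2 := huni.congr_right (g := psi0) (fun t _ => by rw [psi0])
  refine h2.congr ?_
  filter_upwards with N
  intro t ht
  simp only [Finset.sum_sub_distrib]
  ring

lemma tlu_psi1 : TendstoLocallyUniformlyOn
    (fun (N:ℕ) (t:ℝ) => ∑ m ∈ Finset.range (N+1), 1/(t+(m:ℝ))^2)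
    psi1 atTop (Set.Ioi 0) := by
  rw [tendstoLocallyUniformlyOn_iff_forall_isCompact isOpen_Ioi]
  intro K hK hKc
  rcases K.eq_empty_or_nonempty with rfl | hne
  · exact tendstoUniformlyOn_empty
  obtain ⟨a, haK, ha⟩ := hKc.exists_isLeast hne
  have ha0 : 0 < a := hK haK
  have hmin : 0 < min a 1 := lt_min ha0 one_pos
  have huni := tendstoUniformlyOn_tsum_nat'
    (base2.mul_left ((1/min a 1)^2)) (s := K) (f := fun m t => 1/(t+(m:ℝ))^2)
    (fun m x hx => ?_)
  · exact huni.congr_right (g := psi1) (fun t _ => by rw [psi1])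
  · have hax : a ≤ x := ha hx
    have hx0 : 0 < x := lt_of_lt_of_le ha0 hax
    have hbnd := aux_bound a ha0 x hax m
    rw [Real.norm_eq_abs, abs_of_pos (by positivity : (0:ℝ) < 1/(x+(m:ℝ))^2)]
    rw [show (1/min a 1)^2 * (1/((m:ℝ)+1)^2) = 1/((min a 1)^2 * ((m:ℝ)+1)^2) by
      simp [one_div, mul_inv, inv_pow, mul_comm]]
    apply one_div_le_one_div_of_le (by positivity)
    have h1 : (0:ℝ) < (min a 1) * ((m:ℝ)+1) := by positivity
    nlinarith [hbnd, h1]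

lemma hasDeriv_lgs (N : ℕ) (t : ℝ) (ht : t ∈ Set.Ioi (0:ℝ)) :
    HasDerivAt (fun u => Real.BohrMollerup.logGammaSeq u N)
      (Real.log N - ∑ m ∈ Finset.range (N+1), 1/(t+(m:ℝ))) t := by
  have ht0 : (0:ℝ) < t := ht
  unfold Real.BohrMollerup.logGammaSeq
  refine HasDerivAt.sub (((hasDerivAt_id t).mul_const (Real.log N)).add_const _ |>.congr_deriv (by simp)) ?_
  exact HasDerivAt.fun_sum fun m hm =>
    (((hasDerivAt_id t).add_const (m:ℝ)).log (by positivity)).congr_deriv (by simp)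

lemma hasDeriv_dls (N : ℕ) (t : ℝ) (ht : t ∈ Set.Ioi (0:ℝ)) :
    HasDerivAt (fun u => Real.log N - ∑ m ∈ Finset.range (N+1), 1/(u+(m:ℝ)))
      (∑ m ∈ Finset.range (N+1), 1/(t+(m:ℝ))^2) t := by
  have ht0 : (0:ℝ) < t := ht
  have h : HasDerivAt (fun u : ℝ => ∑ m ∈ Finset.range (N+1), 1/(u+(m:ℝ)))
      (∑ m ∈ Finset.range (N+1), -(1/(t+(m:ℝ))^2)) t := by
    refine HasDerivAt.fun_sum fun m hm => ?_
    have hne : t + (m:ℝ) ≠ 0 := by positivity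
    have := ((hasDerivAt_id t).add_const (m:ℝ)).inv hne
    simp only [one_div]
    simp [neg_div] at this
    exact this
  have h2 := h.const_sub (Real.log N)
  simpa only [Finset.sum_neg_distrib, neg_neg] using h2

lemma psi0_hasDerivAt (t : ℝ) (ht : t ∈ Set.Ioi (0:ℝ)) :
    HasDerivAt (fun y => Real.log (Real.Gamma y)) (psi0 t) t := by
  refine hasDerivAt_of_tendstoLocallyUniformlyOn (f := fun (N:ℕ) (u:ℝ) => Real.BohrMollerup.logGammaSeq u N) isOpen_Ioi tlu_psi0 ?_ ?_ ht
  · filter_upwards with N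
    exact fun u hu => hasDeriv_lgs N u hu
  · exact fun u hu => Real.BohrMollerup.tendsto_log_gamma hu

lemma psi1_hasDerivAt (t : ℝ) (ht : t ∈ Set.Ioi (0:ℝ)) :
    HasDerivAt psi0 (psi1 t) t := by
  refine hasDerivAt_of_tendstoLocallyUniformlyOn (f := fun (N:ℕ) (u:ℝ) => Real.log N - ∑ m ∈ Finset.range (N+1), 1/(u+(m:ℝ))) isOpen_Ioi tlu_psi1 ?_ ?_ ht
  · filter_upwards with N
    exact fun u hu => hasDeriv_dls N u hu
  · exact fun u hu => tlu_psi0.tendsto_at hu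

lemma trigamma_eq (y : ℝ) (hy : 0 < y) : trigamma y = psi1 y := by
  rw [trigamma, iteratedDeriv_succ, iteratedDeriv_one]
  have h1 : deriv (fun u => Real.log (Real.Gamma u)) =ᶠ[𝓝 y] psi0 := by
    filter_upwards [isOpen_Ioi.mem_nhds hy] with u hu
    exact (psi0_hasDerivAt u hu).deriv
  rw [h1.deriv_eq]
  exact (psi1_hasDerivAt y hy).deriv

lemma trigamma_hasSum (y : ℝ) (hy : 0 < y) :
    HasSum (fun n : ℕ => 1/(y+(n:ℝ))^2) (trigamma y) := by
  rw [trigamma_eq y hy, psi1]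
  exact (summable_psi1 y hy).hasSum


lemma key_ineq (x : ℝ) (hx : 1 ≤ x) :
    Rr x < trigamma (x + 1/2) / 12 + 1/(240*x^3) := by
  have hx0 : (0:ℝ) < x := by linarith
  have hxa : (0:ℝ) < x + 1/2 := by linarith
  have hS1 := (trigamma_hasSum (x+1/2) hxa).mul_left (1/12)
  have hS2 := cube_hasSum x hx
  have hSg := Rr_hasSum x hx
  have hsum := hS1.add hS2
  have hle : ∀ n : ℕ, gg (x+n) <
      (1/12)*(1/((x+1/2)+(n:ℝ))^2) + (1/(240*(x+(n:ℝ))^3) - 1/(240*(x+(n:ℝ)+1)^3)) := by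
    intro n
    have hxn : (1:ℝ) ≤ x + n := le_add_of_le_of_nonneg hx (Nat.cast_nonneg n)
    have h := gg_lt (x+n) hxn
    have e : 1/(12*((x+(n:ℝ))+1/2)^2) + (1/240)*(1/(x+(n:ℝ))^3 - 1/((x+(n:ℝ))+1)^3)
        = (1/12)*(1/((x+1/2)+(n:ℝ))^2) + (1/(240*(x+(n:ℝ))^3) - 1/(240*(x+(n:ℝ)+1)^3)) := by
      have hp1 : ((x+(n:ℝ))+1/2) = ((x+1/2)+(n:ℝ)) := by ring
      have d1 : (0:ℝ) < x + n := by positivity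
      have d3 : (0:ℝ) < (x+1/2)+(n:ℝ) := by positivity
      have d2 : (0:ℝ) < x + (n:ℝ) + 1 := by linarith
      rw [hp1]
      field_simp
    calc gg (x+n) < _ := h
    _ = _ := e
  have hlt := hasSum_lt (fun n => (hle n).le) (hle 0) hSg hsum
  have e2 : (1/12) * trigamma (x+1/2) + 1/(240*x^3) = trigamma (x+1/2) / 12 + 1/(240*x^3) := by
    ring
  rw [e2] at hlt
  exact hlt

theorem stmt2 (x : ℝ) (hx : 1 ≤ x) :
    Real.exp x * Real.Gamma (x + 1) /
      (x ^ x * Real.sqrt (2 * Real.pi * x) * Real.exp (trigamma (x + 1/2) / 12)) <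
    Real.exp (1 / (240 * x ^ 3)) := by
  have hx0 : (0:ℝ) < x := by linarith
  have hpi := Real.pi_pos
  have hG : 0 < Real.Gamma (x+1) := Real.Gamma_pos_of_pos (by linarith)
  have hxx : (0:ℝ) < x ^ x := Real.rpow_pos_of_pos hx0 x
  have hsq : 0 < Real.sqrt (2*Real.pi*x) := Real.sqrt_pos.mpr (by positivity)
  rw [div_lt_iff₀ (by positivity)]
  have e1 : Real.Gamma (x+1) = Real.exp (Real.log (Real.Gamma (x+1))) := (Real.exp_log hG).symm
  have e2 : x ^ x = Real.exp (Real.log x * x) := Real.rpow_def_of_pos hx0 x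
  have e3 : Real.sqrt (2*Real.pi*x) = Real.exp (Real.log (2*Real.pi*x) / 2) := by
    rw [← Real.log_sqrt (by positivity)]
    exact (Real.exp_log hsq).symm
  rw [e1, e2, e3, ← Real.exp_add, ← Real.exp_add, ← Real.exp_add, ← Real.exp_add,
    Real.exp_lt_exp]
  have hkey := key_ineq x hx
  have hRr : Rr x = Real.log (Real.Gamma (x+1)) -
      (x * Real.log x - x + Real.log (2*Real.pi*x) / 2) := rfl
  have hmc : Real.log x * x = x * Real.log x := mul_comm _ _
  linarith
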